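/- Consider the subgradient-push iterates. Assume: (i) there exist η > 0 with y_i(t) ≥ η for all i and t; (ii) there exist μ ∈ (0,1) and a sequence of stochastic vectors {φ(t)} such that |[Φ_W(t+1,s)]_{ij} − φ_i(t)| ≤ 4 μ^{t−s} for all i,j and all t ≥ s ≥ 0; and (iii) ‖g_i(t)‖ ≤ G for all i and t, where G > 0. Then for all t ≥ 0 and all i ∈ {1,…,n}, ‖ z_i(t+1) − (1/n) Σ_{k=1}^n ( x_k(t) − α(t) g_k(t) ) ‖ ≤ (8/η) μ^t Σ_{k=1}^n ‖ x_k(0) − α(0) g_k(0) ‖ + (8nG/η) Σ_{s=0}^t μ^{t−s} α(s). -/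

import Mathlib

open Finset

/-- Auxiliary backward product: `phiAux M τ k = M (τ+k-1) * ⋯ * M (τ+1) * M τ`. -/
def phiAux {n : ℕ} (M : ℕ → Matrix (Fin n) (Fin n) ℝ) (τ : ℕ) :
    ℕ → Matrix (Fin n) (Fin n) ℝ
  | 0 => 1
  | k + 1 => M (τ + k) * phiAux M τ k

/-- Backward product `Φ_M(t,τ) = M(t-1) * ⋯ * M(τ+1) * M(τ)` for `t > τ`. -/
def Phi {n : ℕ} (M : ℕ → Matrix (Fin n) (Fin n) ℝ) (t τ : ℕ) :
    Matrix (Fin n) (Fin n) ℝ :=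
  phiAux M τ (t - τ)

/-- Consensus-error bound for the subgradient-push iterates. -/
theorem subgradient_push_consensus_bound (n d : ℕ) (hn : 1 ≤ n) (hd : 1 ≤ d)
    (W : ℕ → Matrix (Fin n) (Fin n) ℝ)
    (hWnonneg : ∀ t i j, 0 ≤ W t i j)
    (hWcol : ∀ t j, ∑ i, W t i j = 1)
    (hWdiag : ∀ t i, 0 < W t i i)
    (α : ℕ → ℝ) (hα : ∀ t, 0 < α t)
    (g : ℕ → Fin n → EuclideanSpace ℝ (Fin d))
    (x : ℕ → Fin n → EuclideanSpace ℝ (Fin d))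
    (hx : ∀ t i, x (t + 1) i = ∑ j, W t i j • (x t j - α t • g t j))
    (y : ℕ → Fin n → ℝ)
    (hy0 : ∀ i, y 0 i = 1)
    (hy : ∀ t i, y (t + 1) i = ∑ j, W t i j * y t j)
    -- (i) uniform lower bound on y
    (η : ℝ) (hη : 0 < η) (hylb : ∀ t i, η ≤ y t i)
    -- (ii) exponential ergodicity of the backward products of W
    (μ : ℝ) (hμ0 : 0 < μ) (hμ1 : μ < 1)
    (φ : ℕ → Fin n → ℝ)
    (hφ : ∀ t : ℕ, (∀ i, 0 ≤ φ t i) ∧ ∑ i, φ t i = 1)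
    (hergodic : ∀ t s : ℕ, s ≤ t → ∀ i j : Fin n,
      |Phi W (t + 1) s i j - φ t i| ≤ 4 * μ ^ (t - s))
    -- (iii) uniformly bounded subgradients
    (G : ℝ) (hG : 0 < G) (hgbd : ∀ t i, ‖g t i‖ ≤ G) :
    ∀ t : ℕ, ∀ i : Fin n,
      ‖(y (t + 1) i)⁻¹ • x (t + 1) i - (n : ℝ)⁻¹ • ∑ k, (x t k - α t • g t k)‖
        ≤ (8 / η) * μ ^ t * ∑ k, ‖x 0 k - α 0 • g 0 k‖
          + (8 * n * G / η) * ∑ s ∈ Finset.range (t + 1), μ ^ (t - s) * α s := by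
  classical
  have hnR : (0:ℝ) < n := by exact_mod_cast hn
  have hPhi_succ : ∀ s u : ℕ, s ≤ u → Phi W (u+1) s = W u * Phi W u s := by
    intro s u hsu
    show phiAux W s (u + 1 - s) = _
    have h2 : u + 1 - s = (u - s) + 1 := by omega
    rw [h2]
    show W (s + (u - s)) * phiAux W s (u - s) = _
    have h3 : s + (u - s) = u := by omega
    rw [h3]; rfl
  have hPhi_self : ∀ s : ℕ, Phi W (s+1) s = W s := by
    intro s
    show phiAux W s (s + 1 - s) = _
    have h : s + 1 - s = 1 := by omega
    rw [h]; simp [phiAux]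
  set v : Fin n → EuclideanSpace ℝ (Fin d) := fun k => x 0 k - α 0 • g 0 k with hv
  -- swap lemma
  have hswap : ∀ (c : Fin n → ℝ) (dd : Fin n → Fin n → ℝ)
      (w : Fin n → EuclideanSpace ℝ (Fin d)),
      ∑ j, c j • ∑ k, dd j k • w k = ∑ k, (∑ j, c j * dd j k) • w k := by
    intro c dd w
    simp_rw [Finset.smul_sum, smul_smul]
    rw [Finset.sum_comm]
    simp_rw [Finset.sum_smul]
  -- sum of y is n
  have hysum : ∀ u : ℕ, ∑ m, y u m = n := by
    intro u
    induction u with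
    | zero => simp [hy0]
    | succ u ih =>
      calc ∑ m, y (u+1) m = ∑ m, ∑ j, W u m j * y u j := by simp_rw [hy]
        _ = ∑ j, (∑ m, W u m j) * y u j := by
            rw [Finset.sum_comm]; simp_rw [Finset.sum_mul]
        _ = ∑ j, y u j := by simp [hWcol]
        _ = n := ih
  -- y formula via Phi
  have hyform : ∀ s u : ℕ, s ≤ u → ∀ i,
      y (u+1) i = ∑ m, Phi W (u+1) s i m * y s m := by
    intro s u
    induction u with
    | zero =>
      intro hsu i
      have hs0 : s = 0 := by omega
      subst hs0
      rw [hy, hPhi_self 0]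
    | succ u ih =>
      intro hsu i
      rcases Nat.lt_or_ge s (u+1) with h | h
      · have hsu' : s ≤ u := by omega
        calc y (u+1+1) i = ∑ j, W (u+1) i j * y (u+1) j := hy _ _
          _ = ∑ j, W (u+1) i j * ∑ m, Phi W (u+1) s j m * y s m := by
              simp_rw [ih hsu']
          _ = ∑ m, (∑ j, W (u+1) i j * Phi W (u+1) s j m) * y s m := by
              simp_rw [Finset.mul_sum]
              rw [Finset.sum_comm]
              simp_rw [Finset.sum_mul, mul_assoc]
          _ = ∑ m, Phi W (u+1+1) s i m * y s m := by
              rw [hPhi_succ s (u+1) (by omega)]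
              simp_rw [Matrix.mul_apply]
      · have hs : s = u + 1 := by omega
        subst hs
        rw [hy, hPhi_self (u+1)]
  -- x formula via Phi
  have hxform : ∀ u : ℕ, ∀ i, x (u+1) i
      = ∑ k, Phi W (u+1) 0 i k • v k
        - ∑ s ∈ Finset.Icc 1 u, α s • ∑ k, Phi W (u+1) s i k • g s k := by
    intro u
    induction u with
    | zero =>
      intro i
      rw [hx, hPhi_self 0]
      simp [hv]
    | succ u ih =>
      intro i
      have expand : x (u+1+1) i
          = ∑ j, W (u+1) i j • x (u+1) j
            - α (u+1) • ∑ j, W (u+1) i j • g (u+1) j := by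
        rw [hx]
        simp_rw [smul_sub, Finset.sum_sub_distrib, smul_smul, mul_comm (W (u+1) i _) (α (u+1)),
          ← smul_smul, ← Finset.smul_sum]
      rw [expand]
      have e1 : ∑ j, W (u+1) i j • x (u+1) j
          = ∑ k, Phi W (u+1+1) 0 i k • v k
            - ∑ s ∈ Finset.Icc 1 u, α s • ∑ k, Phi W (u+1+1) s i k • g s k := by
        simp_rw [ih]
        rw [show (∑ j, W (u+1) i j • ((∑ k, Phi W (u+1) 0 j k • v k)
            - ∑ s ∈ Finset.Icc 1 u, α s • ∑ k, Phi W (u+1) s j k • g s k))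
          = (∑ j, W (u+1) i j • ∑ k, Phi W (u+1) 0 j k • v k)
            - ∑ j, W (u+1) i j • ∑ s ∈ Finset.Icc 1 u, α s • ∑ k, Phi W (u+1) s j k • g s k
          from by simp_rw [smul_sub, Finset.sum_sub_distrib]]
        congr 1
        · refine (hswap (fun j => W (u+1) i j) (fun j k => Phi W (u+1) 0 j k) v).trans ?_
          rw [hPhi_succ 0 (u+1) (by omega)]
          simp_rw [Matrix.mul_apply]
        · have e : ∀ j, W (u+1) i j • ∑ s ∈ Finset.Icc 1 u, α s • ∑ k, Phi W (u+1) s j k • g s k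
              = ∑ s ∈ Finset.Icc 1 u, α s • W (u+1) i j • ∑ k, Phi W (u+1) s j k • g s k := by
            intro j
            rw [Finset.smul_sum]
            exact Finset.sum_congr rfl fun s _ => smul_comm _ _ _
          simp_rw [e]
          rw [Finset.sum_comm]
          apply Finset.sum_congr rfl
          intro s hs
          have hs' : s ≤ u := (Finset.mem_Icc.mp hs).2
          rw [← Finset.smul_sum]
          congr 1
          refine (hswap (fun j => W (u+1) i j) (fun j k => Phi W (u+1) s j k) (g s)).trans ?_
          rw [hPhi_succ s (u+1) (by omega)]
          simp_rw [Matrix.mul_apply]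
      rw [e1]
      rw [Finset.sum_Icc_succ_top (by omega : 1 ≤ u + 1)]
      rw [hPhi_self (u+1), sub_sub]
  -- sum formula
  have hsumform : ∀ u : ℕ, ∑ k, (x u k - α u • g u k)
      = ∑ k, v k - ∑ s ∈ Finset.Icc 1 u, α s • ∑ k, g s k := by
    intro u
    induction u with
    | zero => simp [hv]
    | succ u ih =>
      have e1 : ∑ k, x (u+1) k = ∑ j, (x u j - α u • g u j) := by
        simp_rw [hx]
        rw [Finset.sum_comm]
        simp_rw [← Finset.sum_smul, hWcol, one_smul]
      have e2 : ∑ k, (x (u+1) k - α (u+1) • g (u+1) k)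
          = ∑ k, x (u+1) k - α (u+1) • ∑ k, g (u+1) k := by
        rw [Finset.sum_sub_distrib, Finset.smul_sum]
      rw [e2, e1, ih, Finset.sum_Icc_succ_top (by omega : 1 ≤ u + 1), sub_sub]
  -- entry bound
  have hentry : ∀ u s : ℕ, s ≤ u → ∀ i k,
      |Phi W (u+1) s i k - y (u+1) i / n| ≤ 8 * μ ^ (u - s) := by
    intro u s hsu i k
    have hy' := hyform s u hsu i
    have hyn : ∑ m, y s m / n = 1 := by
      rw [← Finset.sum_div, hysum]
      field_simp
    have key : Phi W (u+1) s i k - y (u+1) i / n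
        = ∑ m, (y s m / n) * (Phi W (u+1) s i k - Phi W (u+1) s i m) := by
      simp_rw [mul_sub]
      rw [Finset.sum_sub_distrib, ← Finset.sum_mul, hyn, one_mul, hy']
      congr 1
      rw [Finset.sum_div]
      apply Finset.sum_congr rfl
      intro m _
      ring
    rw [key]
    calc |∑ m, (y s m / n) * (Phi W (u+1) s i k - Phi W (u+1) s i m)|
        ≤ ∑ m, |(y s m / n) * (Phi W (u+1) s i k - Phi W (u+1) s i m)| :=
          Finset.abs_sum_le_sum_abs _ _
      _ ≤ ∑ m, (y s m / n) * (8 * μ ^ (u - s)) := by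
          apply Finset.sum_le_sum
          intro m _
          rw [abs_mul]
          have h1 : 0 ≤ y s m / n := div_nonneg (le_trans hη.le (hylb s m)) hnR.le
          rw [abs_of_nonneg h1]
          apply mul_le_mul_of_nonneg_left _ h1
          have hik := hergodic u s hsu i k
          have him := hergodic u s hsu i m
          calc |Phi W (u+1) s i k - Phi W (u+1) s i m|
              = |(Phi W (u+1) s i k - φ u i) - (Phi W (u+1) s i m - φ u i)| := by
                ring_nf
            _ ≤ |Phi W (u+1) s i k - φ u i| + |Phi W (u+1) s i m - φ u i| :=
                abs_sub _ _
            _ ≤ 4 * μ ^ (u - s) + 4 * μ ^ (u - s) := add_le_add hik him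
            _ = 8 * μ ^ (u - s) := by ring
      _ = (∑ m, y s m / n) * (8 * μ ^ (u - s)) := by rw [Finset.sum_mul]
      _ = 8 * μ ^ (u - s) := by rw [hyn, one_mul]
  -- main
  intro t i
  have hY : 0 < y (t+1) i := lt_of_lt_of_le hη (hylb _ _)
  set c : ℝ := y (t+1) i / n with hc
  have key : x (t+1) i - c • ∑ k, (x t k - α t • g t k)
      = ∑ k, (Phi W (t+1) 0 i k - c) • v k
        - ∑ s ∈ Finset.Icc 1 t, α s • ∑ k, (Phi W (t+1) s i k - c) • g s k := by
    rw [hxform t i, hsumform t]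
    have e1 : ∑ k, (Phi W (t+1) 0 i k - c) • v k
        = ∑ k, Phi W (t+1) 0 i k • v k - c • ∑ k, v k := by
      simp_rw [sub_smul]
      rw [Finset.sum_sub_distrib, Finset.smul_sum]
    have e2 : ∀ s, α s • ∑ k, (Phi W (t+1) s i k - c) • g s k
        = α s • ∑ k, Phi W (t+1) s i k • g s k - c • α s • ∑ k, g s k := by
      intro s
      simp_rw [sub_smul]
      rw [Finset.sum_sub_distrib, smul_sub]
      congr 1
      rw [← Finset.smul_sum, smul_comm]
    simp_rw [e2]
    rw [e1, smul_sub]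
    simp only [Finset.smul_sum, Finset.sum_sub_distrib]
    exact sub_sub_sub_comm _ _ _ _
  -- norm bounds
  have hb1 : ‖∑ k, (Phi W (t+1) 0 i k - c) • v k‖
      ≤ 8 * μ ^ t * ∑ k, ‖v k‖ := by
    calc ‖∑ k, (Phi W (t+1) 0 i k - c) • v k‖
        ≤ ∑ k, ‖(Phi W (t+1) 0 i k - c) • v k‖ := norm_sum_le _ _
      _ ≤ ∑ k, (8 * μ ^ t) * ‖v k‖ := by
          apply Finset.sum_le_sum
          intro k _
          rw [norm_smul, Real.norm_eq_abs]
          apply mul_le_mul_of_nonneg_right _ (norm_nonneg _)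
          have := hentry t 0 (Nat.zero_le t) i k
          simpa using this
      _ = 8 * μ ^ t * ∑ k, ‖v k‖ := by rw [← Finset.mul_sum]
  have hb2 : ∀ s, s ∈ Finset.Icc 1 t →
      ‖α s • ∑ k, (Phi W (t+1) s i k - c) • g s k‖
        ≤ 8 * n * G * (μ ^ (t - s) * α s) := by
    intro s hs
    have hs' : s ≤ t := (Finset.mem_Icc.mp hs).2
    rw [norm_smul, Real.norm_eq_abs, abs_of_pos (hα s)]
    calc α s * ‖∑ k, (Phi W (t+1) s i k - c) • g s k‖
        ≤ α s * ∑ k, ‖(Phi W (t+1) s i k - c) • g s k‖ := by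
          apply mul_le_mul_of_nonneg_left (norm_sum_le _ _) (hα s).le
      _ ≤ α s * ∑ _k : Fin n, (8 * μ ^ (t - s)) * G := by
          apply mul_le_mul_of_nonneg_left _ (hα s).le
          apply Finset.sum_le_sum
          intro k _
          rw [norm_smul, Real.norm_eq_abs]
          have h1 := hentry t s hs' i k
          have h2 := hgbd s k
          have h3 : (0:ℝ) ≤ 8 * μ ^ (t - s) := by positivity
          exact mul_le_mul h1 h2 (norm_nonneg _) h3
      _ = 8 * n * G * (μ ^ (t - s) * α s) := by
          rw [Finset.sum_const, Finset.card_univ, Fintype.card_fin, nsmul_eq_mul]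
          push_cast
          ring
  have hmain : ‖x (t+1) i - c • ∑ k, (x t k - α t • g t k)‖
      ≤ 8 * μ ^ t * ∑ k, ‖v k‖
        + 8 * n * G * ∑ s ∈ Finset.Icc 1 t, μ ^ (t - s) * α s := by
    rw [key]
    calc ‖∑ k, (Phi W (t+1) 0 i k - c) • v k
          - ∑ s ∈ Finset.Icc 1 t, α s • ∑ k, (Phi W (t+1) s i k - c) • g s k‖
        ≤ ‖∑ k, (Phi W (t+1) 0 i k - c) • v k‖
          + ‖∑ s ∈ Finset.Icc 1 t, α s • ∑ k, (Phi W (t+1) s i k - c) • g s k‖ :=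
          norm_sub_le _ _
      _ ≤ 8 * μ ^ t * ∑ k, ‖v k‖
          + ∑ s ∈ Finset.Icc 1 t, 8 * n * G * (μ ^ (t - s) * α s) := by
          apply add_le_add hb1
          exact le_trans (norm_sum_le _ _) (Finset.sum_le_sum hb2)
      _ = 8 * μ ^ t * ∑ k, ‖v k‖
          + 8 * n * G * ∑ s ∈ Finset.Icc 1 t, μ ^ (t - s) * α s := by
          rw [← Finset.mul_sum]
  -- rewrite LHS
  have hLHS : (y (t+1) i)⁻¹ • x (t+1) i - (n : ℝ)⁻¹ • ∑ k, (x t k - α t • g t k)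
      = (y (t+1) i)⁻¹ • (x (t+1) i - c • ∑ k, (x t k - α t • g t k)) := by
    rw [smul_sub, smul_smul, hc]
    congr 2
    field_simp
  rw [hLHS, norm_smul, Real.norm_eq_abs, abs_of_pos (inv_pos.mpr hY)]
  have hinv : (y (t+1) i)⁻¹ ≤ η⁻¹ := by
    apply inv_anti₀ hη (hylb _ _)
  have hRnonneg : 0 ≤ 8 * μ ^ t * ∑ k, ‖v k‖
      + 8 * n * G * ∑ s ∈ Finset.Icc 1 t, μ ^ (t - s) * α s := by
    have : 0 ≤ ∑ s ∈ Finset.Icc 1 t, μ ^ (t - s) * α s :=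
      Finset.sum_nonneg fun s _ => mul_nonneg (by positivity) (hα s).le
    have h2 : 0 ≤ ∑ k, ‖v k‖ := Finset.sum_nonneg fun k _ => norm_nonneg _
    positivity
  calc (y (t+1) i)⁻¹ * ‖x (t+1) i - c • ∑ k, (x t k - α t • g t k)‖
      ≤ η⁻¹ * (8 * μ ^ t * ∑ k, ‖v k‖
          + 8 * n * G * ∑ s ∈ Finset.Icc 1 t, μ ^ (t - s) * α s) := by
        apply mul_le_mul hinv hmain (norm_nonneg _) (inv_pos.mpr hη).le
    _ ≤ (8 / η) * μ ^ t * ∑ k, ‖x 0 k - α 0 • g 0 k‖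
        + (8 * n * G / η) * ∑ s ∈ Finset.range (t + 1), μ ^ (t - s) * α s := by
        rw [mul_add]
        apply add_le_add
        · apply le_of_eq
          rw [hv]
          ring
        · rw [show η⁻¹ * (8 * n * G * ∑ s ∈ Finset.Icc 1 t, μ ^ (t - s) * α s)
            = (8 * n * G / η) * ∑ s ∈ Finset.Icc 1 t, μ ^ (t - s) * α s from by ring]
          apply mul_le_mul_of_nonneg_left _ (by positivity)
          apply Finset.sum_le_sum_of_subset_of_nonneg
          · intro s hs
            simp only [Finset.mem_Icc] at hs
            simp only [Finset.mem_range]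
            omega
          · intro s _ _
            exact mul_nonneg (by positivity) (hα s).le
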